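/- Let (𝒜⁽ⁿ⁾, τ⁽ⁿ⁾) for n ∈ ℕ and (𝒜, τ) be unital C*-algebras equipped with faithful tracial states. Let x⁽ⁿ⁾ ∈ 𝒜⁽ⁿ⁾ and x ∈ 𝒜 be self-adjoint elements such that for every polynomial p ∈ ℂ[X], lim_{n→∞} τ⁽ⁿ⁾(p(x⁽ⁿ⁾)) = τ(p(x)) and lim_{n→∞} ‖p(x⁽ⁿ⁾)‖ = ‖p(x)‖. Let δ > 0 and let f : ℝ → ℂ be a continuous function on the interval I = [−‖x‖ − δ, ‖x‖ + δ]. Then for all sufficiently large n the spectrum of x⁽ⁿ⁾ is contained in I (so that f(x⁽ⁿ⁾) is defined by the continuous functional calculus), and lim_{n→∞} ‖f(x⁽ⁿ⁾)‖ = ‖f(x)‖ and lim_{n→∞} τ⁽ⁿ⁾(f(x⁽ⁿ⁾)) = τ(f(x)). -/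

import Mathlib

/-- `τ` is a faithful tracial state on the unital C⋆-algebra `A`:
a linear functional with `τ 1 = 1`, `τ (a* a) ≥ 0`, `τ (a b) = τ (b a)`, and
`τ (a* a) = 0 → a = 0`. -/
structure IsFaithfulTracialState (A : Type*) [CStarAlgebra A] (τ : A → ℂ) : Prop where
  map_add : ∀ a b, τ (a + b) = τ a + τ b
  map_smul : ∀ (c : ℂ) a, τ (c • a) = c * τ a
  map_one : τ 1 = 1
  nonneg_re : ∀ a, 0 ≤ (τ (star a * a)).re
  im_eq_zero : ∀ a, (τ (star a * a)).im = 0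
  tracial : ∀ a b, τ (a * b) = τ (b * a)
  faithful : ∀ a, τ (star a * a) = 0 → a = 0

open Filter Topology

section Aux

open Polynomial ComplexStarModule

variable {A : Type*} [CStarAlgebra A] {τ : A → ℂ}

lemma IsFaithfulTracialState.nontrivial (hτ : IsFaithfulTracialState A τ) : Nontrivial A := by
  by_contra h
  rw [not_nontrivial_iff_subsingleton] at h
  have h0 : τ 0 = 0 := by simpa using hτ.map_smul 0 0
  have h1 : (1 : A) = 0 := Subsingleton.elim _ _
  exact one_ne_zero (by rw [← hτ.map_one, h1, h0])

lemma IsFaithfulTracialState.map_sub (hτ : IsFaithfulTracialState A τ) (u v : A) :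
    τ (u - v) = τ u - τ v := by
  have h := hτ.map_add (u - v) v
  rw [sub_add_cancel] at h
  exact eq_sub_of_add_eq h.symm

lemma IsFaithfulTracialState.nonneg' (hτ : IsFaithfulTracialState A τ)
    [PartialOrder A] [StarOrderedRing A] {a : A} (ha : 0 ≤ a) :
    τ a = ((τ a).re : ℂ) ∧ 0 ≤ (τ a).re := by
  have h : a = star (CFC.sqrt a) * CFC.sqrt a := by
    rw [(IsSelfAdjoint.of_nonneg (CFC.sqrt_nonneg a)).star_eq, CFC.sqrt_mul_sqrt_self a ha]
  refine ⟨Complex.ext rfl ?_, ?_⟩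
  · rw [h]; simpa using hτ.im_eq_zero (CFC.sqrt a)
  · rw [h]; exact hτ.nonneg_re (CFC.sqrt a)

lemma IsFaithfulTracialState.bound_sa (hτ : IsFaithfulTracialState A τ) {a : A}
    (ha : IsSelfAdjoint a) : ‖τ a‖ ≤ ‖a‖ := by
  letI := CStarAlgebra.spectralOrder A
  haveI := CStarAlgebra.spectralOrderedRing A
  set u : A := algebraMap ℝ A ‖a‖ with hu
  have hτu : τ u = (‖a‖ : ℂ) := by
    rw [hu, Algebra.algebraMap_eq_smul_one, ← Complex.coe_smul, hτ.map_smul, hτ.map_one, mul_one]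
  have h1 : 0 ≤ u - a := sub_nonneg.2 ha.le_algebraMap_norm_self
  have h2 : 0 ≤ u + a := by
    rw [← sub_neg_eq_add, sub_nonneg]
    exact neg_le.mp ha.neg_algebraMap_norm_le_self
  have e1 : τ (u - a) = (‖a‖ : ℂ) - τ a := by rw [hτ.map_sub, hτu]
  have e2 : τ (u + a) = (‖a‖ : ℂ) + τ a := by rw [hτ.map_add, hτu]
  obtain ⟨r1, n1⟩ := hτ.nonneg' h1
  obtain ⟨r2, n2⟩ := hτ.nonneg' h2
  have him2 : (τ (u + a)).im = 0 := by rw [r2]; exact Complex.ofReal_im _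
  have him : (τ a).im = 0 := by
    have h := congrArg Complex.im e2
    simp only [Complex.add_im, Complex.ofReal_im, zero_add] at h
    exact h ▸ him2
  have hre1 : 0 ≤ ‖a‖ - (τ a).re := by
    have h := congrArg Complex.re e1
    simp only [Complex.sub_re, Complex.ofReal_re] at h
    exact h ▸ n1
  have hre2 : 0 ≤ ‖a‖ + (τ a).re := by
    have h := congrArg Complex.re e2
    simp only [Complex.add_re, Complex.ofReal_re] at h
    exact h ▸ n2
  have heq : τ a = ((τ a).re : ℂ) := Complex.ext rfl (by simp [him])
  rw [heq, Complex.norm_real, Real.norm_eq_abs, abs_le]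
  constructor <;> linarith

lemma IsFaithfulTracialState.bound (hτ : IsFaithfulTracialState A τ) (a : A) :
    ‖τ a‖ ≤ 2 * ‖a‖ := by
  have hτa : τ a = τ (ℜ a : A) + Complex.I * τ (ℑ a : A) := by
    conv_lhs => rw [← realPart_add_I_smul_imaginaryPart a]
    rw [hτ.map_add, hτ.map_smul]
  have hr : ‖(ℜ a : A)‖ ≤ ‖a‖ := by
    rw [realPart_apply_coe, norm_smul]
    calc ‖(2:ℝ)⁻¹‖ * ‖a + star a‖ ≤ 2⁻¹ * (‖a‖ + ‖star a‖) := by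
          rw [norm_inv, Real.norm_ofNat]
          exact mul_le_mul_of_nonneg_left (norm_add_le _ _) (by norm_num)
      _ = ‖a‖ := by rw [norm_star]; ring
  have hi : ‖(ℑ a : A)‖ ≤ ‖a‖ := by
    rw [imaginaryPart_apply_coe, norm_smul, norm_smul]
    calc ‖-Complex.I‖ * (‖(2:ℝ)⁻¹‖ * ‖a - star a‖) ≤ 1 * (2⁻¹ * (‖a‖ + ‖star a‖)) := by
          rw [norm_neg, Complex.norm_I, norm_inv, Real.norm_ofNat]
          exact mul_le_mul_of_nonneg_left
            (mul_le_mul_of_nonneg_left (norm_sub_le _ _) (by norm_num)) zero_le_one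
      _ = ‖a‖ := by rw [norm_star]; ring
  calc ‖τ a‖ ≤ ‖τ (ℜ a : A)‖ + ‖Complex.I * τ (ℑ a : A)‖ := by
        rw [hτa]; exact norm_add_le _ _
    _ = ‖τ (ℜ a : A)‖ + ‖τ (ℑ a : A)‖ := by
        rw [norm_mul, Complex.norm_I, one_mul]
    _ ≤ ‖a‖ + ‖a‖ := add_le_add
        ((hτ.bound_sa (ℜ a).2).trans hr) ((hτ.bound_sa (ℑ a).2).trans hi)
    _ = 2 * ‖a‖ := by ring

lemma exists_poly_approx (M : ℝ) {ε : ℝ} (hε : 0 < ε) (f : ℝ → ℂ)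
    (hf : ContinuousOn f (Set.Icc (-M) M)) :
    ∃ p : ℂ[X], ∀ t ∈ Set.Icc (-M) M, ‖f t - p.eval (t : ℂ)‖ ≤ ε := by
  obtain ⟨p₁, hp₁⟩ := exists_polynomial_near_of_continuousOn (-M) M (fun t => (f t).re)
    (Complex.continuous_re.comp_continuousOn hf) (ε/2) (by positivity)
  obtain ⟨p₂, hp₂⟩ := exists_polynomial_near_of_continuousOn (-M) M (fun t => (f t).im)
    (Complex.continuous_im.comp_continuousOn hf) (ε/2) (by positivity)
  refine ⟨p₁.map (algebraMap ℝ ℂ) + Polynomial.C Complex.I * p₂.map (algebraMap ℝ ℂ),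
    fun t ht => ?_⟩
  have h1 : (p₁.map (algebraMap ℝ ℂ)).eval (t : ℂ) = ((p₁.eval t : ℝ) : ℂ) := by
    rw [Polynomial.eval_map, show ((t : ℂ)) = algebraMap ℝ ℂ t from rfl,
      Polynomial.eval₂_at_apply]
    rfl
  have h2 : (p₂.map (algebraMap ℝ ℂ)).eval (t : ℂ) = ((p₂.eval t : ℝ) : ℂ) := by
    rw [Polynomial.eval_map, show ((t : ℂ)) = algebraMap ℝ ℂ t from rfl,
      Polynomial.eval₂_at_apply]
    rfl
  rw [Polynomial.eval_add, Polynomial.eval_mul, Polynomial.eval_C, h1, h2]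
  set z := f t - (((p₁.eval t : ℝ) : ℂ) + Complex.I * ((p₂.eval t : ℝ) : ℂ)) with hz
  have hzre : z.re = (f t).re - p₁.eval t := by simp [hz]
  have hzim : z.im = (f t).im - p₂.eval t := by simp [hz]
  calc ‖z‖ ≤ |z.re| + |z.im| := Complex.norm_le_abs_re_add_abs_im z
    _ ≤ ε/2 + ε/2 := add_le_add
        (by rw [hzre, abs_sub_comm]; exact (hp₁ t ht).le)
        (by rw [hzim, abs_sub_comm]; exact (hp₂ t ht).le)
    _ = ε := by ring

lemma cfc_poly_close {M ε : ℝ} (hε : 0 ≤ ε) (f : ℝ → ℂ)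
    (hf : ContinuousOn f (Set.Icc (-M) M)) (p : ℂ[X])
    (hp : ∀ t ∈ Set.Icc (-M) M, ‖f t - p.eval (t : ℂ)‖ ≤ ε)
    (a : A) (ha : IsSelfAdjoint a) (hspec : spectrum ℝ a ⊆ Set.Icc (-M) M) :
    ‖cfc (fun z : ℂ => f z.re) a - Polynomial.aeval a p‖ ≤ ε := by
  haveI : IsStarNormal a := ha.isStarNormal
  have hmem : ∀ z ∈ spectrum ℂ a, z.re ∈ Set.Icc (-M) M ∧ ((z.re : ℝ) : ℂ) = z := fun z hz =>
    ⟨hspec (ha.spectrumRestricts.apply_mem hz), ha.spectrumRestricts.rightInvOn hz⟩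
  have hcont : ContinuousOn (fun z : ℂ => f z.re) (spectrum ℂ a) :=
    hf.comp Complex.continuous_re.continuousOn (fun z hz => (hmem z hz).1)
  rw [← cfc_polynomial p a, ← cfc_sub _ _ a hcont (p.continuous).continuousOn]
  refine norm_cfc_le hε fun z hz => ?_
  have h := hp z.re (hmem z hz).1
  rwa [(hmem z hz).2] at h

end Aux

/-- One-variable case: if self-adjoint elements `x⁽ⁿ⁾` converge to a self-adjoint `x` in
trace and in norm for every polynomial `p ∈ ℂ[X]`, and `f : ℝ → ℂ` is continuous on
`I = [−‖x‖ − δ, ‖x‖ + δ]` with `δ > 0`, then eventually the spectrum of `x⁽ⁿ⁾` is contained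
in `I` (so `f(x⁽ⁿ⁾)` is defined via the continuous functional calculus, here realized as
`cfc (fun z : ℂ => f z.re)`), and `f(x⁽ⁿ⁾) → f(x)` in norm and in trace. -/
theorem stmt14 {A : ℕ → Type*} [∀ n, CStarAlgebra (A n)] {B : Type*} [CStarAlgebra B]
    (τ' : ∀ n, A n → ℂ) (τ : B → ℂ)
    (hτ' : ∀ n, IsFaithfulTracialState (A n) (τ' n)) (hτ : IsFaithfulTracialState B τ)
    (x' : ∀ n, A n) (x : B)
    (hsa' : ∀ n, IsSelfAdjoint (x' n)) (hsa : IsSelfAdjoint x)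
    (htr : ∀ p : Polynomial ℂ,
      Tendsto (fun n => τ' n (Polynomial.aeval (x' n) p)) atTop
        (𝓝 (τ (Polynomial.aeval x p))))
    (hnorm : ∀ p : Polynomial ℂ,
      Tendsto (fun n => ‖Polynomial.aeval (x' n) p‖) atTop (𝓝 ‖Polynomial.aeval x p‖))
    (δ : ℝ) (hδ : 0 < δ) (f : ℝ → ℂ)
    (hf : ContinuousOn f (Set.Icc (-(‖x‖ + δ)) (‖x‖ + δ))) :
    (∀ᶠ n in atTop, spectrum ℝ (x' n) ⊆ Set.Icc (-(‖x‖ + δ)) (‖x‖ + δ)) ∧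
    Tendsto (fun n => ‖cfc (fun z : ℂ => f z.re) (x' n)‖) atTop
      (𝓝 ‖cfc (fun z : ℂ => f z.re) x‖) ∧
    Tendsto (fun n => τ' n (cfc (fun z : ℂ => f z.re) (x' n))) atTop
      (𝓝 (τ (cfc (fun z : ℂ => f z.re) x))) := by
  have hxa : Tendsto (fun n => ‖x' n‖) atTop (𝓝 ‖x‖) := by
    simpa using hnorm Polynomial.X
  have hev : ∀ᶠ n in atTop, spectrum ℝ (x' n) ⊆ Set.Icc (-(‖x‖ + δ)) (‖x‖ + δ) := by
    filter_upwards [hxa.eventually_lt_const (lt_add_of_pos_right ‖x‖ hδ)] with n h t ht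
    haveI := (hτ' n).nontrivial
    have h2 : |t| ≤ ‖x' n‖ := by
      rw [← Real.norm_eq_abs]; exact spectrum.norm_le_norm_of_mem ht
    exact Set.mem_Icc.mpr (abs_le.mp (h2.trans h.le))
  have hx_spec : spectrum ℝ x ⊆ Set.Icc (-(‖x‖ + δ)) (‖x‖ + δ) := by
    intro t ht
    haveI := hτ.nontrivial
    have h2 : |t| ≤ ‖x‖ := by
      rw [← Real.norm_eq_abs]; exact spectrum.norm_le_norm_of_mem ht
    exact Set.mem_Icc.mpr (abs_le.mp (h2.trans (by linarith)))
  refine ⟨hev, ?_, ?_⟩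
  · rw [Metric.tendsto_nhds]
    intro ε hε
    obtain ⟨p, hp⟩ := exists_poly_approx (‖x‖ + δ) (show (0:ℝ) < ε/4 by linarith) f hf
    have hx_close : ‖cfc (fun z : ℂ => f z.re) x - Polynomial.aeval x p‖ ≤ ε/4 :=
      cfc_poly_close (by linarith) f hf p hp x hsa hx_spec
    filter_upwards [hev, (Metric.tendsto_nhds.mp (hnorm p)) (ε/4) (by linarith)] with n h1 h2
    have hn_close : ‖cfc (fun z : ℂ => f z.re) (x' n) - Polynomial.aeval (x' n) p‖ ≤ ε/4 :=
      cfc_poly_close (by linarith) f hf p hp (x' n) (hsa' n) h1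
    rw [Real.dist_eq] at h2 ⊢
    have t1 : |‖cfc (fun z : ℂ => f z.re) (x' n)‖ - ‖Polynomial.aeval (x' n) p‖| ≤ ε/4 :=
      (abs_norm_sub_norm_le _ _).trans hn_close
    have t3 : |‖Polynomial.aeval x p‖ - ‖cfc (fun z : ℂ => f z.re) x‖| ≤ ε/4 := by
      rw [abs_sub_comm]; exact (abs_norm_sub_norm_le _ _).trans hx_close
    have big := abs_sub_le ‖cfc (fun z : ℂ => f z.re) (x' n)‖ ‖Polynomial.aeval (x' n) p‖
      ‖cfc (fun z : ℂ => f z.re) x‖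
    have big2 := abs_sub_le ‖Polynomial.aeval (x' n) p‖ ‖Polynomial.aeval x p‖
      ‖cfc (fun z : ℂ => f z.re) x‖
    linarith
  · rw [Metric.tendsto_nhds]
    intro ε hε
    obtain ⟨p, hp⟩ := exists_poly_approx (‖x‖ + δ) (show (0:ℝ) < ε/10 by linarith) f hf
    have hx_close : ‖cfc (fun z : ℂ => f z.re) x - Polynomial.aeval x p‖ ≤ ε/10 :=
      cfc_poly_close (by linarith) f hf p hp x hsa hx_spec
    have hx_tr : dist (τ (Polynomial.aeval x p)) (τ (cfc (fun z : ℂ => f z.re) x)) ≤ ε/5 := by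
      rw [Complex.dist_eq, ← hτ.map_sub]
      calc ‖τ (Polynomial.aeval x p - cfc (fun z : ℂ => f z.re) x)‖
          ≤ 2 * ‖Polynomial.aeval x p - cfc (fun z : ℂ => f z.re) x‖ := hτ.bound _
        _ ≤ 2 * (ε/10) := by
            rw [norm_sub_rev]
            exact mul_le_mul_of_nonneg_left hx_close (by norm_num)
        _ = ε/5 := by ring
    filter_upwards [hev, (Metric.tendsto_nhds.mp (htr p)) (ε/10) (by linarith)] with n h1 h2
    have hn_close : ‖cfc (fun z : ℂ => f z.re) (x' n) - Polynomial.aeval (x' n) p‖ ≤ ε/10 :=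
      cfc_poly_close (by linarith) f hf p hp (x' n) (hsa' n) h1
    have hn_tr : dist (τ' n (cfc (fun z : ℂ => f z.re) (x' n)))
        (τ' n (Polynomial.aeval (x' n) p)) ≤ ε/5 := by
      rw [Complex.dist_eq, ← (hτ' n).map_sub]
      calc ‖τ' n (cfc (fun z : ℂ => f z.re) (x' n) - Polynomial.aeval (x' n) p)‖
          ≤ 2 * ‖cfc (fun z : ℂ => f z.re) (x' n) - Polynomial.aeval (x' n) p‖ := (hτ' n).bound _
        _ ≤ 2 * (ε/10) := mul_le_mul_of_nonneg_left hn_close (by norm_num)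
        _ = ε/5 := by ring
    calc dist (τ' n (cfc (fun z : ℂ => f z.re) (x' n))) (τ (cfc (fun z : ℂ => f z.re) x))
        ≤ dist (τ' n (cfc (fun z : ℂ => f z.re) (x' n))) (τ' n (Polynomial.aeval (x' n) p))
          + dist (τ' n (Polynomial.aeval (x' n) p)) (τ (Polynomial.aeval x p))
          + dist (τ (Polynomial.aeval x p)) (τ (cfc (fun z : ℂ => f z.re) x)) :=
          dist_triangle4 _ _ _ _
      _ ≤ ε/5 + ε/10 + ε/5 := add_le_add (add_le_add hn_tr h2.le) hx_tr
      _ < ε := by linarith
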